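/- Let d ≥ 1, E = ℂ^{2d}, and let U, V, W ⊆ E be d-dimensional subspaces with U ∩ V = V ∩ W = U ∩ W = 0, with pencil f(s, t) = (s·p_U + t·p_W)(V). Then the intersection of all subspaces f(s, t) for (s, t) ≠ (0, 0) is the zero subspace, and their sum is all of E. -/

import Mathlib

open Module

/-- The projection of `E` onto `U` along `W` (for `E = U ⊕ W`), viewed as an
endomorphism of `E`. -/
noncomputable def projAlong {E : Type*} [AddCommGroup E] [Module ℂ E]
    (U W : Submodule ℂ E) (h : IsCompl U W) : E →ₗ[ℂ] E :=
  U.subtype.comp (Submodule.linearProjOfIsCompl U W h)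

/-- The pencil of subspaces `f(s,t) = (s·p_U + t·p_W)(V)`. -/
noncomputable def pencil {E : Type*} [AddCommGroup E] [Module ℂ E]
    (U V W : Submodule ℂ E) (h : IsCompl U W) (s t : ℂ) : Submodule ℂ E :=
  V.map (s • projAlong U W h + t • projAlong W U h.symm)

lemma ker_projAlong {E : Type*} [AddCommGroup E] [Module ℂ E]
    (U W : Submodule ℂ E) (h : IsCompl U W) :
    LinearMap.ker (projAlong U W h) = W := by
  rw [projAlong, LinearMap.ker_comp, Submodule.ker_subtype, Submodule.comap_bot,
    Submodule.linearProjOfIsCompl, Submodule.ker_projectionOnto]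

lemma range_projAlong {E : Type*} [AddCommGroup E] [Module ℂ E]
    (U W : Submodule ℂ E) (h : IsCompl U W) :
    LinearMap.range (projAlong U W h) = U := by
  rw [projAlong, LinearMap.range_comp, Submodule.linearProjOfIsCompl, Submodule.range_projectionOnto,
    Submodule.map_top, Submodule.range_subtype]

lemma finrank_map_of_disjoint {E : Type*} [AddCommGroup E] [Module ℂ E]
    [FiniteDimensional ℂ E] (f : E →ₗ[ℂ] E) (V : Submodule ℂ E)
    (h : LinearMap.ker f ⊓ V = ⊥) : finrank ℂ (V.map f) = finrank ℂ V := by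
  have hinj : Function.Injective (f.domRestrict V) := by
    rw [← LinearMap.ker_eq_bot, LinearMap.ker_domRestrict]
    rw [Submodule.eq_bot_iff] at h ⊢
    intro x hx
    have : (x : E) = 0 := h x ⟨hx, x.2⟩
    exact Subtype.ext this
  have e := LinearEquiv.ofInjective (f.domRestrict V) hinj
  have := e.finrank_eq
  rw [LinearMap.range_domRestrict] at this
  exact this.symm

/-- The kernel of the pencil (the intersection of all the subspaces `f(s,t)` for
`(s,t) ≠ (0,0)`) is zero, and its span (the sum of all these subspaces) is all
of `E = ℂ^{2d}`. -/
theorem stmt_6 {E : Type*} [AddCommGroup E] [Module ℂ E] [FiniteDimensional ℂ E]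
    (d : ℕ) (hd : 1 ≤ d) (hE : finrank ℂ E = 2 * d)
    (U V W : Submodule ℂ E)
    (hU : finrank ℂ U = d) (hV : finrank ℂ V = d) (hW : finrank ℂ W = d)
    (hUV : U ⊓ V = ⊥) (hVW : V ⊓ W = ⊥) (hUW : U ⊓ W = ⊥)
    (hc : IsCompl U W) :
    (⨅ p : {p : ℂ × ℂ // p ≠ (0, 0)}, pencil U V W hc p.1.1 p.1.2) = ⊥ ∧
      (⨆ p : {p : ℂ × ℂ // p ≠ (0, 0)}, pencil U V W hc p.1.1 p.1.2) = ⊤ := by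
  have h10 : pencil U V W hc 1 0 = U := by
    have heq : (1 : ℂ) • projAlong U W hc + (0 : ℂ) • projAlong W U hc.symm
        = projAlong U W hc := by simp
    rw [pencil, heq]
    have hle : V.map (projAlong U W hc) ≤ U := by
      rintro x ⟨v, hv, rfl⟩; exact Submodule.coe_mem _
    have hfr : finrank ℂ (V.map (projAlong U W hc)) = finrank ℂ V :=
      finrank_map_of_disjoint _ _ (by rw [ker_projAlong]; rw [inf_comm] at hVW; exact hVW)
    exact Submodule.eq_of_le_of_finrank_le hle (by rw [hU, hfr, hV])
  have h01 : pencil U V W hc 0 1 = W := by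
    have heq : (0 : ℂ) • projAlong U W hc + (1 : ℂ) • projAlong W U hc.symm
        = projAlong W U hc.symm := by simp
    rw [pencil, heq]
    have hle : V.map (projAlong W U hc.symm) ≤ W := by
      rintro x ⟨v, hv, rfl⟩; exact Submodule.coe_mem _
    have hfr : finrank ℂ (V.map (projAlong W U hc.symm)) = finrank ℂ V :=
      finrank_map_of_disjoint _ _ (by rw [ker_projAlong]; exact hUV)
    exact Submodule.eq_of_le_of_finrank_le hle (by rw [hW, hfr, hV])
  constructor
  · apply le_antisymm _ bot_le
    have h1 : (⨅ p : {p : ℂ × ℂ // p ≠ (0, 0)}, pencil U V W hc p.1.1 p.1.2) ≤ U := by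
      have := iInf_le (fun p : {p : ℂ × ℂ // p ≠ (0, 0)} => pencil U V W hc p.1.1 p.1.2)
        ⟨(1, 0), by simp⟩
      rwa [h10] at this
    have h2 : (⨅ p : {p : ℂ × ℂ // p ≠ (0, 0)}, pencil U V W hc p.1.1 p.1.2) ≤ W := by
      have := iInf_le (fun p : {p : ℂ × ℂ // p ≠ (0, 0)} => pencil U V W hc p.1.1 p.1.2)
        ⟨(0, 1), by simp⟩
      rwa [h01] at this
    rw [← hUW]
    exact le_inf h1 h2
  · apply le_antisymm le_top
    have h1 : U ≤ ⨆ p : {p : ℂ × ℂ // p ≠ (0, 0)}, pencil U V W hc p.1.1 p.1.2 := by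
      have := le_iSup (fun p : {p : ℂ × ℂ // p ≠ (0, 0)} => pencil U V W hc p.1.1 p.1.2)
        ⟨(1, 0), by simp⟩
      rwa [h10] at this
    have h2 : W ≤ ⨆ p : {p : ℂ × ℂ // p ≠ (0, 0)}, pencil U V W hc p.1.1 p.1.2 := by
      have := le_iSup (fun p : {p : ℂ × ℂ // p ≠ (0, 0)} => pencil U V W hc p.1.1 p.1.2)
        ⟨(0, 1), by simp⟩
      rwa [h01] at this
    rw [← hc.sup_eq_top]
    exact sup_le h1 h2
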